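/- Define g_P(x) = (1 − x)² + (P − 1)·x·(1 − x + log x). Then there exist constants C > 0 and P₀ ≥ 4 such that for all real P ≥ P₀, |log(P) · g_P(1/(P·log P)) + log(log P)| ≤ C. In particular, g_P(1/(P·log P)) → 0 as P → ∞. -/

import Mathlib

open Real Filter

private lemma deo_aux_bound (P : ℝ) (hP : P ≥ 4) :
    |Real.log P * ((1 - 1/(P*Real.log P)) ^ 2 +
      (P - 1) * (1/(P*Real.log P)) * (1 - 1/(P*Real.log P) + Real.log (1/(P*Real.log P))))
      + Real.log (Real.log P)| ≤ 5 := by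
  have hP0 : (0:ℝ) < P := by linarith
  have hL1 : (1:ℝ) < Real.log P := by
    rw [Real.lt_log_iff_exp_lt hP0]
    have := Real.exp_one_lt_d9
    linarith
  have hL0 : (0:ℝ) < Real.log P := by linarith
  set L := Real.log P with hLdef
  set M := Real.log L with hMdef
  have hPL : (0:ℝ) < P * L := by positivity
  have hlogx : Real.log (1/(P*L)) = -(L + M) := by
    rw [one_div, Real.log_inv, Real.log_mul (ne_of_gt hP0) (ne_of_gt hL0)]
  set x := 1/(P*L) with hxdef
  have hx0 : 0 < x := by positivity
  have hx1 : x ≤ 1 := by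
    rw [hxdef, div_le_one hPL]; nlinarith
  have hLP : L ≤ P := by
    have := Real.log_le_sub_one_of_pos hP0; linarith
  have hM0 : 0 ≤ M := Real.log_nonneg (le_of_lt hL1)
  have hML : M ≤ L := by
    have := Real.log_le_sub_one_of_pos hL0; linarith
  have key : L * ((1 - x) ^ 2 + (P - 1) * x * (1 - x + Real.log x)) + M
      = (L - 2 + x + M)/P + (P-1)*(1-x)/P := by
    rw [hlogx, hxdef]
    field_simp
    ring
  rw [key, abs_le]
  constructor
  · rw [← add_div, le_div_iff₀ hP0]
    nlinarith
  · rw [← add_div, div_le_iff₀ hP0]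
    nlinarith

theorem deo_g_asymptotic_root :
    let gP : ℝ → ℝ → ℝ :=
      fun P x => (1 - x) ^ 2 + (P - 1) * x * (1 - x + Real.log x)
    (∃ C > (0 : ℝ), ∃ P₀ ≥ (4 : ℝ), ∀ P : ℝ, P ≥ P₀ →
      |Real.log P * gP P (1 / (P * Real.log P)) + Real.log (Real.log P)| ≤ C) ∧
    Filter.Tendsto (fun P : ℝ => gP P (1 / (P * Real.log P)))
      Filter.atTop (nhds 0) := by
  intro gP
  constructor
  · exact ⟨5, by norm_num, 4, le_refl 4, fun P hP => deo_aux_bound P hP⟩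
  · -- squeeze: |gP P x| ≤ (5 + log (log P)) / log P
    have hbound : ∀ᶠ P : ℝ in atTop,
        ‖gP P (1 / (P * Real.log P))‖ ≤ (5 + Real.log (Real.log P)) / Real.log P := by
      filter_upwards [eventually_ge_atTop (4:ℝ)] with P hP
      have hP0 : (0:ℝ) < P := by linarith
      have hL1 : (1:ℝ) < Real.log P := by
        rw [Real.lt_log_iff_exp_lt hP0]
        have := Real.exp_one_lt_d9
        linarith
      have hL0 : (0:ℝ) < Real.log P := by linarith
      have hM0 : 0 ≤ Real.log (Real.log P) := Real.log_nonneg (le_of_lt hL1)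
      have h : |Real.log P * gP P (1 / (P * Real.log P)) + Real.log (Real.log P)| ≤ 5 :=
        deo_aux_bound P hP
      have h2 : |Real.log P * gP P (1 / (P * Real.log P))| ≤ 5 + Real.log (Real.log P) := by
        calc |Real.log P * gP P (1 / (P * Real.log P))|
            = |(Real.log P * gP P (1 / (P * Real.log P)) + Real.log (Real.log P))
                - Real.log (Real.log P)| := by ring_nf
          _ ≤ |Real.log P * gP P (1 / (P * Real.log P)) + Real.log (Real.log P)|
                + |Real.log (Real.log P)| := abs_sub _ _
          _ ≤ 5 + Real.log (Real.log P) := by rw [abs_of_nonneg hM0]; linarith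
      rw [Real.norm_eq_abs, le_div_iff₀ hL0]
      calc |gP P (1 / (P * Real.log P))| * Real.log P
          = |Real.log P * gP P (1 / (P * Real.log P))| := by
            rw [abs_mul, abs_of_pos hL0]; ring
        _ ≤ 5 + Real.log (Real.log P) := h2
    have hto : Tendsto (fun P : ℝ => (5 + Real.log (Real.log P)) / Real.log P) atTop (nhds 0) := by
      have h1 : Tendsto (fun P : ℝ => 5 / Real.log P) atTop (nhds 0) := by
        apply Tendsto.div_atTop tendsto_const_nhds Real.tendsto_log_atTop
      have h2 : Tendsto (fun P : ℝ => Real.log (Real.log P) / Real.log P) atTop (nhds 0) := by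
        have := (Real.isLittleO_log_id_atTop.tendsto_div_nhds_zero).comp Real.tendsto_log_atTop
        exact this
      have := h1.add h2
      simpa [add_div] using this
    exact squeeze_zero_norm' hbound hto
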